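/- (Lemma 1) Let h_pd, h_sd, λ_p, μ_p, ψ be real numbers with 0 < h_sd and 0 < λ_p < μ_p, and set N_p = (λ_p − λ_p²)/(μ_p − λ_p). Suppose K = −h_sd·((λ_p²/μ_p)·(μ_p − h_pd)·(1 − μ_p) − (λ_p·ψ − N_p)·(λ_p² − 2·λ_p·μ_p + μ_p²)) > 0 and f ≥ 0. Then b* = min(1, f) is a maximizer of problem P2: b* lies in the feasible set S = {b ∈ ℝ : 0 ≤ b ≤ 1 and φ_ψ(b) ≤ 0}, and for every b ∈ S, μ_s(b) ≤ μ_s(b*), where μ_s(b) = b·h_sd·(1 − λ_p/μ_p). -/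

import Mathlib

/-- Lemma 1: Under `0 < h_sd`, `0 < λ_p < μ_p`, `K > 0` and `f ≥ 0`,
`b* = min 1 f` is a maximizer of problem P2: it is feasible, and every feasible `b`
satisfies `μ_s(b) ≤ μ_s(b*)`, where `μ_s(b) = b·h_sd·(1 − λ_p/μ_p)`. -/
theorem lemma1_optimal_b_P2
    (h_pd h_sd lam_p mu_p ψ : ℝ)
    (hsd : 0 < h_sd) (hlp : 0 < lam_p) (hlm : lam_p < mu_p)
    (N_p : ℝ) (hNp : N_p = (lam_p - lam_p ^ 2) / (mu_p - lam_p))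
    (φ : ℝ → ℝ)
    (hφ : ∀ b : ℝ, φ b =
      lam_p * (mu_p - h_pd) *
        ((1 - b) * h_sd * (1 - mu_p) * lam_p - (mu_p - h_pd) * mu_p * lam_p
          - h_pd * lam_p + mu_p ^ 2)
      - mu_p * (mu_p - lam_p) *
        ((1 - b) * h_sd * (mu_p - lam_p) - lam_p * (mu_p - h_pd)) * (lam_p * ψ - N_p))
    (K : ℝ)
    (hK : K = -h_sd * ((lam_p ^ 2 / mu_p) * (mu_p - h_pd) * (1 - mu_p)
      - (lam_p * ψ - N_p) * (lam_p ^ 2 - 2 * lam_p * mu_p + mu_p ^ 2)))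
    (hKpos : 0 < K)
    (f : ℝ)
    (hf : f = 1 -
      (lam_p ^ 2 * (mu_p - h_pd) * (-h_pd / mu_p - (mu_p - h_pd))
        + lam_p * mu_p * (mu_p - h_pd)
        - (lam_p * ψ - N_p) * (mu_p - h_pd) * (lam_p ^ 2 - lam_p * mu_p)) / K)
    (hf0 : 0 ≤ f)
    (μ_s : ℝ → ℝ)
    (hμs : ∀ b : ℝ, μ_s b = b * h_sd * (1 - lam_p / mu_p)) :
    min 1 f ∈ {b : ℝ | 0 ≤ b ∧ b ≤ 1 ∧ φ b ≤ 0} ∧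
      ∀ b ∈ {b : ℝ | 0 ≤ b ∧ b ≤ 1 ∧ φ b ≤ 0}, μ_s b ≤ μ_s (min 1 f) := by

  have hmu : 0 < mu_p := hlp.trans hlm
  have hKne : K ≠ 0 := ne_of_gt hKpos
  have hmune : mu_p ≠ 0 := ne_of_gt hmu
  have h1 : mu_p * K = -h_sd * (lam_p ^ 2 * (mu_p - h_pd) * (1 - mu_p)
      - (lam_p * ψ - N_p) * (lam_p ^ 2 - 2 * lam_p * mu_p + mu_p ^ 2) * mu_p) := by
    rw [hK]; field_simp
  have hKf : mu_p * (K * f) = mu_p * K -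
      (lam_p ^ 2 * (mu_p - h_pd) * (-h_pd - mu_p * (mu_p - h_pd))
        + mu_p * (lam_p * mu_p * (mu_p - h_pd))
        - mu_p * ((lam_p * ψ - N_p) * (mu_p - h_pd) * (lam_p ^ 2 - lam_p * mu_p))) := by
    rw [hf]; field_simp
  have key : ∀ b : ℝ, φ b = mu_p * K * (b - f) := by
    intro b
    rw [hφ]
    linear_combination (1 - b) * h1 + hKf
  have hMK : 0 < mu_p * K := mul_pos hmu hKpos
  have hfeas : min 1 f ∈ {b : ℝ | 0 ≤ b ∧ b ≤ 1 ∧ φ b ≤ 0} := by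
    refine ⟨le_min zero_le_one hf0, min_le_left _ _, ?_⟩
    rw [key]
    have : min 1 f - f ≤ 0 := by
      have := min_le_right (1:ℝ) f; linarith
    exact mul_nonpos_of_nonneg_of_nonpos (le_of_lt hMK) this
  refine ⟨hfeas, ?_⟩
  rintro b ⟨hb0, hb1, hbφ⟩
  rw [key] at hbφ
  have hbf : b ≤ f := by
    nlinarith [hMK]
  have hble : b ≤ min 1 f := le_min hb1 hbf
  rw [hμs, hμs]
  have hc : 0 ≤ h_sd * (1 - lam_p / mu_p) := by
    have : lam_p / mu_p ≤ 1 := (div_le_one hmu).mpr hlm.le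
    nlinarith
  calc b * h_sd * (1 - lam_p / mu_p) = b * (h_sd * (1 - lam_p / mu_p)) := by ring
    _ ≤ min 1 f * (h_sd * (1 - lam_p / mu_p)) := mul_le_mul_of_nonneg_right hble hc
    _ = min 1 f * h_sd * (1 - lam_p / mu_p) := by ring
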